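/- Let ρ : [0,∞) → ℝ be continuous with ρ(u) ≥ Φ > 0 for all u, and let γ ∈ [0,1). Every bounded solution f of the ODE (1−γ) f'(x) = ρ(x) f(x) − γ on [0,∞) is given by f(x) = (γ/(1−γ)) ∫ₓ^∞ exp(−(1/(1−γ)) ∫ₓ^y ρ(u) du) dy; i.e., the bounded solution is unique. -/

import Mathlib

open Set MeasureTheory Filter

theorem stmt3 (Φ γ : ℝ) (hΦ : 0 < Φ) (hγ : γ ∈ Set.Ico (0:ℝ) 1)
    (ρ : ℝ → ℝ) (hρc : Continuous ρ) (hρ : ∀ u, 0 ≤ u → Φ ≤ ρ u)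
    (f f' : ℝ → ℝ) (hderiv : ∀ x, 0 ≤ x → HasDerivAt f (f' x) x)
    (hode : ∀ x, 0 ≤ x → (1 - γ) * f' x = ρ x * f x - γ)
    (M : ℝ) (hbdd : ∀ x, 0 ≤ x → |f x| ≤ M) :
    ∀ x, 0 ≤ x → f x = (γ / (1 - γ)) *
      ∫ y in Set.Ici x, Real.exp (-(1 / (1 - γ)) * ∫ u in x..y, ρ u) := by
  obtain ⟨hγ0, hγ1⟩ := hγ
  have h1γ : (0:ℝ) < 1 - γ := by linarith
  set c : ℝ := (1 - γ)⁻¹ with hc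
  have hcpos : 0 < c := inv_pos.mpr h1γ
  set F : ℝ → ℝ := fun y => ∫ u in (0:ℝ)..y, ρ u with hFdef
  have hint : ∀ a b : ℝ, IntervalIntegrable ρ volume a b := fun a b =>
    hρc.intervalIntegrable a b
  have hF : ∀ y : ℝ, HasDerivAt F (ρ y) y := by
    intro y
    exact intervalIntegral.integral_hasDerivAt_right (hint 0 y)
      (hρc.stronglyMeasurableAtFilter _ _) hρc.continuousAt
  set E : ℝ → ℝ := fun y => Real.exp (-(c * F y)) with hEdef
  have hE : ∀ y : ℝ, HasDerivAt E (-(E y * (c * ρ y))) y := by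
    intro y
    simpa using ((hF y).const_mul (-c)).exp
  have hEcont : Continuous E := Real.continuous_exp.comp (((continuous_const.mul
    (intervalIntegral.continuous_primitive (fun a b => hint a b) 0))).neg)
  have hEpos : ∀ y, 0 < E y := fun y => Real.exp_pos _
  -- Lower bound on F for y ≥ 0
  have hFlb : ∀ y : ℝ, 0 ≤ y → Φ * y ≤ F y := by
    intro y hy
    have : ∫ u in (0:ℝ)..y, Φ ≤ ∫ u in (0:ℝ)..y, ρ u := by
      apply intervalIntegral.integral_mono_on hy (intervalIntegrable_const) (hint 0 y)
      intro u hu; exact hρ u hu.1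
    simpa [mul_comm] using this
  have hEub : ∀ y : ℝ, 0 ≤ y → E y ≤ Real.exp (-(c * Φ) * y) := by
    intro y hy
    apply Real.exp_le_exp.mpr
    have := hFlb y hy
    nlinarith [hcpos.le]
  -- Integrability of E on Ici x for x ≥ 0
  have hEint : ∀ x : ℝ, 0 ≤ x → IntegrableOn E (Ici x) := by
    intro x hx
    have hbase : IntegrableOn (fun y => Real.exp (-(c * Φ) * y)) (Ici x) := by
      have := exp_neg_integrableOn_Ioi x (mul_pos hcpos hΦ)
      simpa [integrableOn_Ici_iff_integrableOn_Ioi] using this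
    apply hbase.mono' (hEcont.aestronglyMeasurable.restrict)
    filter_upwards [ae_restrict_mem measurableSet_Ici] with y hy
    rw [Real.norm_eq_abs, abs_of_pos (hEpos y)]
    exact hEub y (le_trans hx hy)
  intro x hx
  -- derivative of f*E on [0,∞)
  have hG : ∀ y : ℝ, 0 ≤ y → HasDerivAt (fun y => f y * E y) (-(c * γ) * E y) y := by
    intro y hy
    have h := (hderiv y hy).mul (hE y)
    have hf' : f' y = c * (ρ y * f y - γ) := by
      have := hode y hy
      rw [hc, ← this, inv_mul_cancel_left₀ h1γ.ne']
    rw [show -(c * γ) * E y = f' y * E y + f y * -(E y * (c * ρ y)) by rw [hf']; ring]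
    exact h
  -- FTC on [x, T]
  have key : ∀ T : ℝ, x ≤ T →
      f x * E x = f T * E T + (c * γ) * ∫ y in x..T, E y := by
    intro T hT
    have := intervalIntegral.integral_eq_sub_of_hasDerivAt
      (f := fun y => f y * E y) (f' := fun y => -(c * γ) * E y) (a := x) (b := T)
      (fun t ht => hG t (le_trans hx (by rw [uIcc_of_le hT] at ht; exact ht.1)))
      ((continuous_const.mul hEcont).intervalIntegrable x T)
    rw [intervalIntegral.integral_const_mul] at this
    simp only [neg_mul, neg_neg] at this
    linarith [this]
  -- limits
  have hlim1 : Tendsto (fun T => f T * E T) atTop (nhds 0) := by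
    have hM : 0 ≤ M := le_trans (abs_nonneg _) (hbdd 0 le_rfl)
    have hexp : Tendsto (fun T => M * Real.exp (-(c * Φ) * T)) atTop (nhds 0) := by
      have : Tendsto (fun T : ℝ => Real.exp (-(c * Φ) * T)) atTop (nhds 0) := by
        apply Real.tendsto_exp_atBot.comp
        exact (tendsto_id.const_mul_atTop_of_neg (by nlinarith))
      simpa using this.const_mul M
    apply squeeze_zero_norm' ?_ hexp
    filter_upwards [eventually_ge_atTop (0:ℝ)] with T hT
    calc ‖f T * E T‖ = |f T| * E T := by
          rw [Real.norm_eq_abs, abs_mul, abs_of_pos (hEpos T)]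
      _ ≤ M * Real.exp (-(c * Φ) * T) :=
          mul_le_mul (hbdd T hT) (hEub T hT) (hEpos T).le hM
  have hlim2 : Tendsto (fun T => ∫ y in x..T, E y) atTop
      (nhds (∫ y in Ici x, E y)) := by
    rw [integral_Ici_eq_integral_Ioi]
    exact intervalIntegral_tendsto_integral_Ioi x
      ((hEint x hx).mono_set Ioi_subset_Ici_self) tendsto_id
  have hmain : f x * E x = (c * γ) * ∫ y in Ici x, E y := by
    have h1 : Tendsto (fun T => f T * E T + (c * γ) * ∫ y in x..T, E y) atTop
        (nhds (0 + (c * γ) * ∫ y in Ici x, E y)) :=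
      hlim1.add (hlim2.const_mul _)
    have h2 : Tendsto (fun T => f T * E T + (c * γ) * ∫ y in x..T, E y) atTop
        (nhds (f x * E x)) := by
      apply Tendsto.congr' _ tendsto_const_nhds
      filter_upwards [eventually_ge_atTop x] with T hT
      exact key T hT
    have := tendsto_nhds_unique h2 h1
    simpa using this
  -- rewrite target integrand
  have hcongr : (∫ y in Ici x, Real.exp (-(1 / (1 - γ)) * ∫ u in x..y, ρ u))
      = Real.exp (c * F x) * ∫ y in Ici x, E y := by
    rw [← integral_const_mul]
    apply setIntegral_congr_fun measurableSet_Ici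
    intro y hy
    have hsub : (∫ u in x..y, ρ u) = F y - F x :=
      (intervalIntegral.integral_interval_sub_left (hint 0 y) (hint 0 x)).symm
    show Real.exp (-(1 / (1 - γ)) * ∫ u in x..y, ρ u) = Real.exp (c * F x) * E y
    rw [hsub, show E y = Real.exp (-(c * F y)) from rfl, ← Real.exp_add]
    congr 1
    rw [one_div, hc]
    ring
  rw [hcongr]
  have : f x = (c * γ) * (∫ y in Ici x, E y) * Real.exp (c * F x) := by
    have h2 := congrArg (· * Real.exp (c * F x)) hmain
    rw [show E x = Real.exp (-(c * F x)) from rfl] at h2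
    rw [mul_assoc, ← Real.exp_add, neg_add_cancel, Real.exp_zero, mul_one] at h2
    exact h2
  rw [this, hc, div_eq_mul_inv]
  ring
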